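/- Let p be a prime with p ≡ 1 (mod 4). Then, in Z_p, Γ_p(c) · Σ_{k=0}^{(p−1)/2} ((1/2)_k / k!)² (−1)^k ≡ Γ_p(a) · Γ_p(b) (mod p) for any positive integers a, b, c with 2a ≡ 1 (mod p), 4b ≡ 1 (mod p), and 4c ≡ 3 (mod p). (Equivalently, the truncated series {}_2F_1(1/2, 1/2; 1; −1)_{(p−1)/2} is congruent to Γ_p(1/2)Γ_p(1/4)/Γ_p(3/4) modulo p.) -/

import Mathlib

open Finset

/-- The rising factorial (Pochhammer symbol) `(a)_k = a(a+1)⋯(a+k−1)` in `ℤ_p`. -/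
noncomputable def poch {p : ℕ} [Fact p.Prime] (a : ℤ_[p]) (k : ℕ) : ℤ_[p] :=
  ∏ i ∈ Finset.range k, (a + (i : ℤ_[p]))

/-- For a positive integer `a`, `Γ_p(a) = (−1)^a ∏_{0<j<a, p∤j} j ∈ ℤ_p`; this represents
the `p`-adic Gamma value `Γ_p(t)` modulo `p^r` whenever `a ≡ t (mod p^r)`. -/
noncomputable def GammaP (p : ℕ) [Fact p.Prime] (a : ℕ) : ℤ_[p] :=
  (-1) ^ a * ∏ j ∈ (Finset.Ioo 0 a).filter (fun j => ¬ p ∣ j), (j : ℤ_[p])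

section Aux
open Polynomial

lemma coeff_one_sub_X_pow (m k : ℕ) :
    ((1 - X : ℤ[X]) ^ m).coeff k = (-1)^k * (m.choose k : ℤ) := by
  have h : (1 - X : ℤ[X]) = (-1) * (X + C (-1)) := by
    rw [map_neg, C_1]; ring
  rw [h, mul_pow, ← C_1, ← C_neg, ← C_pow, coeff_C_mul, coeff_X_add_C_pow]
  rcases le_or_gt k m with hk | hk
  · have h2 : (-1:ℤ)^m * (-1)^(m-k) = (-1)^k := by
      rw [← pow_add, show m + (m-k) = k + 2*(m-k) by omega, pow_add, pow_mul]
      simp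
    calc (-1:ℤ)^m * ((-1)^(m-k) * (m.choose k : ℤ))
        = ((-1:ℤ)^m * (-1)^(m-k)) * (m.choose k : ℤ) := by ring
      _ = (-1:ℤ)^k * (m.choose k : ℤ) := by rw [h2]
  · simp [Nat.choose_eq_zero_of_lt hk]

lemma alt_sum_choose_sq (t : ℕ) :
    ∑ k ∈ Finset.range (2*t+1), (-1:ℤ)^k * ((2*t).choose k : ℤ)^2
      = (-1)^t * ((2*t).choose t : ℤ) := by
  set m := 2*t with hm
  have key : (((1 - X) * (1 + X) : ℤ[X]) ^ m).coeff m
      = (((1 - X)^m : ℤ[X]) * (1 + X)^m).coeff m := by rw [mul_pow]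
  have hterm : ∀ j : ℕ, ((1:ℤ[X])^j * (-(X^2))^(m-j) * (m.choose j : ℤ[X]))
      = C ((-1)^(m-j) * (m.choose j : ℤ)) * X^(2*(m-j)) := by
    intro j
    rw [neg_pow, one_pow, one_mul, map_mul, map_pow, C_neg, C_1, pow_mul, C_eq_natCast]
    push_cast
    ring
  have h2 : (((1 - X) * (1 + X) : ℤ[X]) ^ m).coeff m = (-1)^t * ((2*t).choose t : ℤ) := by
    have heq : ((1 - X) * (1 + X) : ℤ[X]) = 1 + (-(X^2)) := by ring
    rw [heq, add_pow, finset_sum_coeff]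
    rw [Finset.sum_eq_single t]
    · rw [hterm, coeff_C_mul, coeff_X_pow, if_pos (by omega)]
      simp [hm, show m - t = t by omega, show 2*t - t = t by omega]
    · intro j hj hjt
      rw [hterm, coeff_C_mul, coeff_X_pow, if_neg (by simp at hj; omega)]
      simp
    · intro h; exact absurd (by simp; omega) h
  have h3 : (((1 - X)^m : ℤ[X]) * (1 + X)^m).coeff m
      = ∑ k ∈ Finset.range (m+1), (-1:ℤ)^k * ((m).choose k : ℤ)^2 := by
    rw [coeff_mul, Finset.Nat.sum_antidiagonal_eq_sum_range_succ
      (f := fun i j => ((1 - X : ℤ[X])^m).coeff i * ((1 + X : ℤ[X])^m).coeff j)]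
    refine Finset.sum_congr rfl fun k hk => ?_
    rw [coeff_one_sub_X_pow, coeff_one_add_X_pow, Nat.choose_symm (by simp at hk; omega)]
    ring
  rw [← h3, ← key, h2]

end Aux

section Aux2
variable (p : ℕ) [Fact p.Prime]


lemma prod_sliding (n : ℕ) :
    ∏ j ∈ (Finset.Ico n (n+p)).filter (fun j => ¬ p ∣ j), (j : ZMod p)
      = ∏ x ∈ Finset.univ.filter (fun x : ZMod p => x ≠ 0), x := by
  have hinj : Set.InjOn (fun j : ℕ => (j : ZMod p)) (Finset.Ico n (n+p)) := by
    intro i hi j hj hij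
    simp only [Finset.coe_Ico, Set.mem_Ico] at hi hj
    have h1 : i ≡ j [MOD p] := (ZMod.natCast_eq_natCast_iff i j p).mp hij
    rcases le_total i j with h | h
    · have h2 := (Nat.modEq_iff_dvd' h).mp h1
      have := Nat.eq_zero_of_dvd_of_lt h2 (by omega)
      omega
    · have h2 := (Nat.modEq_iff_dvd' h).mp h1.symm
      have := Nat.eq_zero_of_dvd_of_lt h2 (by omega)
      omega
  have himg : (Finset.Ico n (n+p)).image (fun j : ℕ => (j : ZMod p)) = Finset.univ := by
    apply Finset.eq_univ_of_card
    rw [Finset.card_image_of_injOn hinj, Nat.card_Ico, ZMod.card p]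
    omega
  have hfilt : Finset.univ.filter (fun x : ZMod p => x ≠ 0)
      = ((Finset.Ico n (n+p)).filter (fun j => ¬ p ∣ j)).image (fun j : ℕ => (j : ZMod p)) := by
    rw [← himg, Finset.filter_image]
    congr 1
    apply Finset.filter_congr
    intro j _
    simp [Ne, ZMod.natCast_eq_zero_iff]
  rw [hfilt, Finset.prod_image (fun i hi j hj hij =>
    hinj (Finset.mem_coe.mpr (Finset.filter_subset _ _ hi))
      (Finset.mem_coe.mpr (Finset.filter_subset _ _ hj)) hij)]

lemma prod_nonzero : ∏ x ∈ Finset.univ.filter (fun x : ZMod p => x ≠ 0), x = -1 := by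
  have hp := (Fact.out : p.Prime).two_le
  rw [← prod_sliding p 1]
  have hs : (Finset.Ico 1 (1+p)).filter (fun j => ¬ p ∣ j) = Finset.Ico 1 p := by
    ext j
    simp only [Finset.mem_filter, Finset.mem_Ico]
    constructor
    · rintro ⟨⟨h1, h2⟩, h3⟩
      refine ⟨h1, ?_⟩
      rcases eq_or_lt_of_le (show j ≤ p by omega) with h | h
      · exact absurd (h ▸ dvd_refl p) (h ▸ h3)
      · exact h
    · rintro ⟨h1, h2⟩
      refine ⟨⟨h1, by omega⟩, fun hd => ?_⟩
      have := Nat.le_of_dvd (by omega) hd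
      omega
  rw [hs]
  have hw := ZMod.wilsons_lemma p
  rw [← hw, ← Nat.cast_prod]
  congr 1
  rw [← Finset.prod_Ico_id_eq_factorial (p-1), show p - 1 + 1 = p by omega]

lemma gammaP_step (hodd : p % 2 = 1) (n : ℕ) (hn : 0 < n) :
    PadicInt.toZMod (GammaP p (n + p)) = PadicInt.toZMod (GammaP p n) := by
  have hsplit : Finset.Ioo 0 (n+p) = Finset.Ioo 0 n ∪ Finset.Ico n (n+p) := by
    rw [← Finset.Ico_add_one_left_eq_Ioo, ← Finset.Ico_add_one_left_eq_Ioo, Finset.Ico_union_Ico_eq_Ico (by omega) (by omega)]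
  have hdisj : Disjoint ((Finset.Ioo 0 n).filter (fun j => ¬ p ∣ j))
      ((Finset.Ico n (n+p)).filter (fun j => ¬ p ∣ j)) := by
    apply Finset.disjoint_filter_filter
    rw [← Finset.Ico_add_one_left_eq_Ioo]
    exact Finset.Ico_disjoint_Ico_consecutive 1 n (n+p)
  rw [GammaP, GammaP, hsplit, Finset.filter_union, Finset.prod_union hdisj]
  rw [map_mul, map_mul, map_mul, map_pow, map_pow, map_neg, map_one, map_prod, map_prod]
  have hc : ∀ j : ℕ, PadicInt.toZMod ((j : ℤ_[p])) = (j : ZMod p) := fun j => map_natCast _ j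
  simp only [hc]
  rw [prod_sliding, prod_nonzero]
  rw [pow_add, Odd.neg_one_pow (Nat.odd_iff.mpr hodd)]
  ring

lemma gammaP_mod (hodd : p % 2 = 1) (a a' : ℕ) (ha : 0 < a) (ha' : 0 < a')
    (h : a ≡ a' [MOD p]) : PadicInt.toZMod (GammaP p a) = PadicInt.toZMod (GammaP p a') := by
  have key : ∀ k n, 0 < n → PadicInt.toZMod (GammaP p (n + p * k)) = PadicInt.toZMod (GammaP p n) := by
    intro k
    induction k with
    | zero => simp
    | succ k ih =>
      intro n hn
      rw [show n + p * (k+1) = (n + p * k) + p by ring, gammaP_step p hodd _ (by omega), ih n hn]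
  have hp2 := (Fact.out : p.Prime).two_le
  rcases le_total a a' with hle | hle
  · obtain ⟨k, hk⟩ := (Nat.modEq_iff_dvd' hle).mp h
    rw [show a' = a + p * k by omega, key k a ha]
  · obtain ⟨k, hk⟩ := (Nat.modEq_iff_dvd' hle).mp h.symm
    rw [show a = a' + p * k by omega, key k a' ha']

lemma gammaP_small (n : ℕ) (hn : 0 < n) (hnp : n ≤ p) :
    GammaP p n = (-1) ^ n * ((n-1).factorial : ℤ_[p]) := by
  rw [GammaP]
  congr 1
  rw [Finset.filter_true_of_mem (fun j hj => ?_), ← Nat.cast_prod]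
  · congr 1
    rw [← Finset.prod_Ico_id_eq_factorial (n-1), show n - 1 + 1 = n by omega, ← Finset.Ico_add_one_left_eq_Ioo, zero_add]
  · simp only [Finset.mem_Ioo] at hj
    intro hd
    have := Nat.le_of_dvd hj.1 hd
    omega

lemma isUnit_natCast_padic (n : ℕ) (h : ¬ p ∣ n) : IsUnit (n : ℤ_[p]) := by
  by_contra hu
  apply h
  have h1 : (n : ℤ_[p]) ∈ nonunits ℤ_[p] := hu
  have h2 : (n : ℤ_[p]) ∈ IsLocalRing.maximalIdeal ℤ_[p] :=
    (IsLocalRing.mem_maximalIdeal _).mpr h1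
  have h3 : PadicInt.toZMod ((n : ℤ_[p])) = 0 := by
    rw [← RingHom.mem_ker, PadicInt.ker_toZMod]
    exact h2
  rw [map_natCast] at h3
  exact (ZMod.natCast_eq_zero_iff n p).mp h3

lemma toZMod_inverse (x : ℤ_[p]) (hx : IsUnit x) :
    PadicInt.toZMod (Ring.inverse x) = (PadicInt.toZMod x)⁻¹ := by
  have h := Ring.mul_inverse_cancel x hx
  have h2 : PadicInt.toZMod x * PadicInt.toZMod (Ring.inverse x) = 1 := by
    rw [← map_mul, h, map_one]
  exact ((inv_eq_of_mul_eq_one_right h2)).symm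

end Aux2

/-- Proposition 3.1: for `p ≡ 1 (mod 4)`,
`₂F₁(1/2,1/2; 1; −1)_{(p−1)/2} ≡ Γ_p(1/2)Γ_p(1/4)/Γ_p(3/4) (mod p)`. -/
theorem stmt_10 (p : ℕ) [Fact p.Prime] (hp : p % 4 = 1)
    (a b c : ℕ) (ha : 0 < a) (hb : 0 < b) (hc : 0 < c)
    (hacong : 2 * a ≡ 1 [MOD p]) (hbcong : 4 * b ≡ 1 [MOD p])
    (hccong : 4 * c ≡ 3 [MOD p]) :
    ∃ z : ℤ_[p],
      GammaP p c *
          (∑ k ∈ Finset.range ((p - 1) / 2 + 1),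
            poch (Ring.inverse (2 : ℤ_[p])) k ^ 2 *
              Ring.inverse (k.factorial : ℤ_[p]) ^ 2 * (-1 : ℤ_[p]) ^ k)
        - GammaP p a * GammaP p b = (p : ℤ_[p]) * z := by
  have hp2 := (Fact.out : p.Prime).two_le
  have hprime : p.Prime := Fact.out
  have hodd : p % 2 = 1 := by omega
  obtain ⟨t, hp4⟩ : ∃ t, p = 4*t+1 := ⟨p/4, by omega⟩
  -- reduce to residue field
  suffices h : PadicInt.toZMod (GammaP p c *
          (∑ k ∈ Finset.range ((p - 1) / 2 + 1),
            poch (Ring.inverse (2 : ℤ_[p])) k ^ 2 *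
              Ring.inverse (k.factorial : ℤ_[p]) ^ 2 * (-1 : ℤ_[p]) ^ k)
        - GammaP p a * GammaP p b) = 0 by
    have hmem : (GammaP p c *
          (∑ k ∈ Finset.range ((p - 1) / 2 + 1),
            poch (Ring.inverse (2 : ℤ_[p])) k ^ 2 *
              Ring.inverse (k.factorial : ℤ_[p]) ^ 2 * (-1 : ℤ_[p]) ^ k)
        - GammaP p a * GammaP p b) ∈ Ideal.span {(p : ℤ_[p])} := by
      rw [← PadicInt.maximalIdeal_eq_span_p, ← PadicInt.ker_toZMod]
      exact RingHom.mem_ker.mpr h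
    rw [Ideal.mem_span_singleton] at hmem
    obtain ⟨z, hz⟩ := hmem
    exact ⟨z, hz⟩
  have hm : (p - 1) / 2 = 2 * t := by omega
  -- facts about factorials being nonzero mod p
  have hfacnd : ∀ k : ℕ, k ≤ 3*t → ¬ p ∣ k.factorial := by
    intro k hk hd
    have := (Nat.Prime.dvd_factorial hprime).mp hd
    omega
  have hfacne : ∀ k : ℕ, k ≤ 3*t → ((k.factorial : ZMod p)) ≠ 0 := by
    intro k hk h0
    exact hfacnd k hk ((ZMod.natCast_eq_zero_iff _ p).mp h0)
  -- inverse of 2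
  have h2nd : ¬ p ∣ 2 := fun hd => by have := Nat.le_of_dvd (by norm_num) hd; omega
  have hinv2 : IsUnit (2 : ℤ_[p]) := by
    have := isUnit_natCast_padic p 2 h2nd
    simpa using this
  have htwo : PadicInt.toZMod (2 : ℤ_[p]) = (2 : ZMod p) := by
    have : ((2:ℕ) : ℤ_[p]) = (2 : ℤ_[p]) := by norm_num
    rw [← this, map_natCast]
    norm_num
  have hpz : ((p : ℕ) : ZMod p) = 0 := ZMod.natCast_self p
  have hinvK : (2 : ZMod p)⁻¹ = -((2*t : ℕ) : ZMod p) := by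
    have h41 : ((4*t+1 : ℕ) : ZMod p) = 0 := by rw [← hp4]; exact hpz
    have hmul : (2 : ZMod p) * (-((2*t : ℕ) : ZMod p)) = 1 := by
      push_cast at h41 ⊢
      linear_combination -h41
    exact inv_eq_of_mul_eq_one_right hmul
  -- poch evaluation
  have hphipoch : ∀ k, k ≤ 2*t → PadicInt.toZMod (poch (Ring.inverse (2:ℤ_[p])) k)
      = (-1)^k * (((2*t).descFactorial k : ℕ) : ZMod p) := by
    intro k hk
    rw [poch, map_prod]
    have hterm : ∀ i ∈ Finset.range k, PadicInt.toZMod (Ring.inverse (2:ℤ_[p]) + (i : ℤ_[p]))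
        = (-1) * (((2*t - i : ℕ)) : ZMod p) := by
      intro i hi
      simp only [Finset.mem_range] at hi
      rw [map_add, toZMod_inverse p _ hinv2, htwo, hinvK, map_natCast]
      rw [Nat.cast_sub (by omega)]
      push_cast
      ring
    rw [Finset.prod_congr rfl hterm, Finset.prod_mul_distrib, Finset.prod_const,
      Finset.card_range, ← Nat.cast_prod, ← Nat.descFactorial_eq_prod_range]
  -- term evaluation
  have hterm : ∀ k ∈ Finset.range (2*t+1),
      PadicInt.toZMod (poch (Ring.inverse (2 : ℤ_[p])) k ^ 2 *
        Ring.inverse (k.factorial : ℤ_[p]) ^ 2 * (-1 : ℤ_[p]) ^ k)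
      = (((2*t).choose k : ℕ) : ZMod p)^2 * (-1)^k := by
    intro k hk
    simp only [Finset.mem_range] at hk
    have hkle : k ≤ 2*t := by omega
    rw [map_mul, map_mul, map_pow, map_pow, map_pow, map_neg, map_one]
    rw [hphipoch k hkle, toZMod_inverse p _ (isUnit_natCast_padic p k.factorial
      (hfacnd k (by omega))), map_natCast]
    have hd : (((2*t).descFactorial k : ℕ) : ZMod p)
        = (k.factorial : ZMod p) * (((2*t).choose k : ℕ) : ZMod p) := by
      rw [Nat.descFactorial_eq_factorial_mul_choose]
      push_cast
      ring
    have hsq : ((-1 : ZMod p)^k)^2 = 1 := by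
      rw [← pow_mul, mul_comm, pow_mul]
      norm_num
    rw [hd, mul_pow, hsq, one_mul]
    have hk0 : ((k.factorial : ℕ) : ZMod p) ≠ 0 := hfacne k (by omega)
    field_simp
  -- sum evaluation
  have hsum : PadicInt.toZMod (∑ k ∈ Finset.range (2*t+1),
      poch (Ring.inverse (2 : ℤ_[p])) k ^ 2 *
        Ring.inverse (k.factorial : ℤ_[p]) ^ 2 * (-1 : ℤ_[p]) ^ k)
      = (-1)^t * (((2*t).choose t : ℕ) : ZMod p) := by
    rw [map_sum, Finset.sum_congr rfl hterm]
    have hcast : ∑ k ∈ Finset.range (2*t+1), (((2*t).choose k : ℕ) : ZMod p)^2 * (-1)^k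
        = ((∑ k ∈ Finset.range (2*t+1), (-1:ℤ)^k * ((2*t).choose k : ℤ)^2 : ℤ) : ZMod p) := by
      push_cast
      exact Finset.sum_congr rfl fun k _ => by ring
    rw [hcast, alt_sum_choose_sq]
    push_cast
    ring
  -- Wilson-type fact
  have hF : ((3*t).factorial : ZMod p) * ((t.factorial : ℕ) : ZMod p) * (-1)^t = -1 := by
    have hw : (((p-1).factorial : ℕ) : ZMod p) = -1 := ZMod.wilsons_lemma p
    have h4t : (((4*t).factorial : ℕ) : ZMod p) = -1 := by
      rw [show 4*t = p-1 by omega]; exact hw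
    have hsplit : (4*t).factorial = (3*t).factorial * ∏ j ∈ Finset.Ico (3*t+1) (4*t+1), j := by
      rw [← Finset.prod_Ico_id_eq_factorial (3*t), ← Finset.prod_Ico_id_eq_factorial (4*t)]
      exact (Finset.prod_Ico_consecutive _ (by omega) (by omega)).symm
    have hrefl : ∏ j ∈ Finset.Ico (3*t+1) (4*t+1), ((j:ℕ) : ZMod p)
        = (-1)^t * ((t.factorial : ℕ) : ZMod p) := by
      rw [Finset.prod_Ico_eq_prod_range]
      have hr : ∀ i ∈ Finset.range (4*t+1 - (3*t+1)), ((3*t+1+i : ℕ) : ZMod p)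
          = (-1) * (((t - i : ℕ)) : ZMod p) := by
        intro i hi
        simp only [Finset.mem_range] at hi
        have hsum2 : ((3*t+1+i : ℕ) : ZMod p) + ((t-i : ℕ) : ZMod p) = 0 := by
          rw [← Nat.cast_add, show 3*t+1+i + (t-i) = p by omega, hpz]
        linear_combination hsum2
      rw [Finset.prod_congr rfl hr, Finset.prod_mul_distrib, Finset.prod_const,
        Finset.card_range, show 4*t+1 - (3*t+1) = t by omega,
        ← Nat.cast_prod, ← Nat.descFactorial_eq_prod_range, Nat.descFactorial_self]
    have : (((4*t).factorial : ℕ) : ZMod p)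
        = ((3*t).factorial : ZMod p) * ((-1)^t * ((t.factorial : ℕ) : ZMod p)) := by
      rw [hsplit]
      push_cast [← hrefl]
      ring
    rw [this] at h4t
    linear_combination h4t
  -- Gamma values
  have hcop2 : Nat.gcd p 2 = 1 := (Nat.Prime.coprime_iff_not_dvd hprime).mpr h2nd
  have h4nd : ¬ p ∣ 4 := fun hd => by have := Nat.le_of_dvd (by norm_num) hd; omega
  have hcop4 : Nat.gcd p 4 = 1 := (Nat.Prime.coprime_iff_not_dvd hprime).mpr h4nd
  have hGa : PadicInt.toZMod (GammaP p a) = (-1)^(2*t+1) * (((2*t).factorial : ℕ) : ZMod p) := by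
    have hcg : a ≡ 2*t+1 [MOD p] := by
      apply Nat.ModEq.cancel_left_of_coprime hcop2
      calc 2*a ≡ 1 [MOD p] := hacong
        _ ≡ 2*(2*t+1) [MOD p] := by
            show 1 % p = (2*(2*t+1)) % p
            rw [show 2*(2*t+1) = p + 1 by omega, Nat.add_mod_left]
    rw [gammaP_mod p hodd a (2*t+1) ha (by omega) hcg,
      gammaP_small p (2*t+1) (by omega) (by omega),
      map_mul, map_pow, map_neg, map_one, map_natCast,
      show 2*t+1-1 = 2*t by omega]
  have hGb : PadicInt.toZMod (GammaP p b) = (-1)^(3*t+1) * (((3*t).factorial : ℕ) : ZMod p) := by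
    have hcg : b ≡ 3*t+1 [MOD p] := by
      apply Nat.ModEq.cancel_left_of_coprime hcop4
      calc 4*b ≡ 1 [MOD p] := hbcong
        _ ≡ 4*(3*t+1) [MOD p] := by
            show 1 % p = (4*(3*t+1)) % p
            rw [show 4*(3*t+1) = p + (p + (p + 1)) by omega,
              Nat.add_mod_left, Nat.add_mod_left, Nat.add_mod_left]
    rw [gammaP_mod p hodd b (3*t+1) hb (by omega) hcg,
      gammaP_small p (3*t+1) (by omega) (by omega),
      map_mul, map_pow, map_neg, map_one, map_natCast,
      show 3*t+1-1 = 3*t by omega]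
  have hGc : PadicInt.toZMod (GammaP p c) = (-1)^(t+1) * ((t.factorial : ℕ) : ZMod p) := by
    have hcg : c ≡ t+1 [MOD p] := by
      apply Nat.ModEq.cancel_left_of_coprime hcop4
      calc 4*c ≡ 3 [MOD p] := hccong
        _ ≡ 4*(t+1) [MOD p] := by
            show 3 % p = (4*(t+1)) % p
            rw [show 4*(t+1) = p + 3 by omega, Nat.add_mod_left]
    rw [gammaP_mod p hodd c (t+1) hc (by omega) hcg,
      gammaP_small p (t+1) (by omega) (by omega),
      map_mul, map_pow, map_neg, map_one, map_natCast,
      show t+1-1 = t by omega]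
  -- final computation
  rw [hm, map_sub, map_mul, map_mul, hsum, hGa, hGb, hGc]
  have hCK : (((2*t).choose t : ℕ) : ZMod p) * ((t.factorial : ℕ) : ZMod p)
      * ((t.factorial : ℕ) : ZMod p) = (((2*t).factorial : ℕ) : ZMod p) := by
    have hnat := Nat.choose_mul_factorial_mul_factorial (show t ≤ 2*t by omega)
    rw [show 2*t - t = t by omega] at hnat
    rw [← Nat.cast_mul, ← Nat.cast_mul, hnat]
  have hAne : ((t.factorial : ℕ) : ZMod p) ≠ 0 := hfacne t (by omega)
  have hu : ((-1 : ZMod p)^t) * ((-1 : ZMod p)^t) = 1 := by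
    rw [← pow_add, ← two_mul, pow_mul]
    norm_num
  have h2t1 : (-1 : ZMod p)^(2*t+1) = -1 := by
    rw [pow_succ, pow_mul]
    norm_num
  have h3t1 : (-1 : ZMod p)^(3*t+1) = (-1 : ZMod p)^t * (-1) := by
    rw [pow_succ, show 3*t = t + 2*t by ring, pow_add, pow_mul]
    norm_num
  have ht1 : (-1 : ZMod p)^(t+1) = (-1 : ZMod p)^t * (-1) := pow_succ _ _
  rw [h2t1, h3t1, ht1]
  apply mul_left_cancel₀ hAne
  linear_combination (-1 : ZMod p) * hCK - (((2*t).factorial : ℕ) : ZMod p) * hF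
    - ((t.factorial : ℕ) : ZMod p) * ((t.factorial : ℕ) : ZMod p)
      * (((2*t).choose t : ℕ) : ZMod p) * hu
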